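/- Let 0 = t₀ < t₁ < ... < t_p = M be a partition of [0,M] and let ψ : [0,M) → ℝ² be piecewise constant with ψ(s) = Cᵢ for s ∈ [tᵢ, tᵢ₊₁). Let τ be a transportation cost (non-decreasing, concave, τ(0)=0). Then |∫_{s₁}^{s₂} ψ ds| ≤ τ(|s₂ - s₁|) holds for all s₁, s₂ ∈ [0,M] if and only if it holds for all s₁, s₂ ∈ {t₀, ..., t_p}. -/

import Mathlib

open MeasureTheory intervalIntegral

section Helpers

lemma concave_bridge {E : Type*} [NormedAddCommGroup E] [NormedSpace ℝ E]
    (τ : ℝ → ℝ) (hconc : ConcaveOn ℝ (Set.Ici 0) τ)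
    {c₀ Δ : ℝ} (hc₀ : 0 ≤ c₀) (w C : E)
    (h0 : ‖w‖ ≤ τ c₀) (hΔ : ‖w + Δ • C‖ ≤ τ (c₀ + Δ))
    {u : ℝ} (hu : u ∈ Set.Icc 0 Δ) : ‖w + u • C‖ ≤ τ (c₀ + u) := by
  have hΔ0 : 0 ≤ Δ := hu.1.trans hu.2
  set f : ℝ → ℝ := (fun x => τ (c₀ + x)) - (fun x => ‖w + x • C‖) with hfdef
  have hτc : ConcaveOn ℝ (Set.Icc 0 Δ) (fun x => τ (c₀ + x)) := by
    have h := hconc.translate_right c₀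
    exact (h.subset (fun x hx => by
      simp only [Set.mem_preimage, Set.mem_Ici]
      have : (0:ℝ) ≤ x := hx.1
      linarith) (convex_Icc _ _))
  have hnc : ConvexOn ℝ (Set.Icc 0 Δ) (fun x => ‖w + x • C‖) := by
    have h := (convexOn_univ_norm (E := E)).comp_affineMap (AffineMap.lineMap w (w + C))
    have h2 : ConvexOn ℝ (Set.Icc 0 Δ) (norm ∘ ⇑(AffineMap.lineMap w (w + C) : ℝ →ᵃ[ℝ] E)) :=
      h.subset (Set.subset_univ _) (convex_Icc (0:ℝ) Δ)
    convert h2 using 1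
    funext x
    simp [AffineMap.lineMap_apply, Function.comp]
    congr 1
    abel
  have hfc : ConcaveOn ℝ (Set.Icc 0 Δ) f := hτc.sub hnc
  have hseg : u ∈ segment ℝ (0:ℝ) Δ := by rw [segment_eq_Icc hΔ0]; exact hu
  have hmin := hfc.ge_on_segment (Set.left_mem_Icc.mpr hΔ0) (Set.right_mem_Icc.mpr hΔ0) hseg
  have h1 : 0 ≤ f 0 := by simp [hfdef]; simpa using h0
  have h2 : 0 ≤ f Δ := by simp [hfdef]; simpa using hΔ
  have h3 : 0 ≤ f u := le_trans (le_min h1 h2) hmin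
  simp [hfdef] at h3
  linarith

lemma exists_pc_Ico {p : ℕ} (hp : 0 < p) (t : Fin (p + 1) → ℝ)
    {s : ℝ} (h1 : t 0 ≤ s) (h2 : s < t (Fin.last p)) :
    ∃ i : Fin p, s ∈ Set.Ico (t i.castSucc) (t i.succ) := by
  classical
  set S := Finset.univ.filter (fun i : Fin p => t i.castSucc ≤ s) with hS
  have hne : S.Nonempty := by
    refine ⟨⟨0, hp⟩, ?_⟩
    simp only [hS, Finset.mem_filter, Finset.mem_univ, true_and]
    have : (Fin.castSucc (⟨0, hp⟩ : Fin p)) = (0 : Fin (p+1)) := rfl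
    rw [this]; exact h1
  set i := S.max' hne with hi
  have hmem : t i.castSucc ≤ s := by
    have := S.max'_mem hne
    simp only [hS, Finset.mem_filter, Finset.mem_univ, true_and] at this
    exact this
  refine ⟨i, hmem, ?_⟩
  by_contra h; push_neg at h
  have hlt : i.val + 1 < p := by
    by_contra hh; push_neg at hh
    have hpe : i.val + 1 = p := by omega
    have : i.succ = Fin.last p := by ext; simp [hpe]
    rw [this] at h
    linarith
  have hmem2 : (⟨i.val + 1, hlt⟩ : Fin p) ∈ S := by
    simp only [hS, Finset.mem_filter, Finset.mem_univ, true_and]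
    have : (Fin.castSucc (⟨i.val + 1, hlt⟩ : Fin p)) = i.succ := rfl
    rw [this]; exact h
  have := S.le_max' _ hmem2
  rw [← hi] at this
  simp [Fin.le_def] at this

lemma exists_pc_Ioc {p : ℕ} (hp : 0 < p) (t : Fin (p + 1) → ℝ)
    {s : ℝ} (h1 : t 0 < s) (h2 : s ≤ t (Fin.last p)) :
    ∃ j : Fin p, s ∈ Set.Ioc (t j.castSucc) (t j.succ) := by
  classical
  set S := Finset.univ.filter (fun j : Fin p => s ≤ t j.succ) with hS
  have hne : S.Nonempty := by
    refine ⟨⟨p - 1, by omega⟩, ?_⟩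
    simp only [hS, Finset.mem_filter, Finset.mem_univ, true_and]
    have : (Fin.succ (⟨p - 1, by omega⟩ : Fin p)) = Fin.last p := by ext; simp; omega
    rw [this]; exact h2
  set j := S.min' hne with hj
  have hmem : s ≤ t j.succ := by
    have := S.min'_mem hne
    simp only [hS, Finset.mem_filter, Finset.mem_univ, true_and] at this
    exact this
  refine ⟨j, ?_, hmem⟩
  by_contra h; push_neg at h
  have hpos : 0 < j.val := by
    by_contra hh; push_neg at hh
    have : j.castSucc = (0 : Fin (p+1)) := by ext; simpa using hh
    rw [this] at h
    linarith
  have hlt : j.val - 1 < p := by omega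
  have hmem2 : (⟨j.val - 1, hlt⟩ : Fin p) ∈ S := by
    simp only [hS, Finset.mem_filter, Finset.mem_univ, true_and]
    have : (Fin.succ (⟨j.val - 1, hlt⟩ : Fin p)) = j.castSucc := by ext; simp; omega
    rw [this]; exact h
  have := S.min'_le _ hmem2
  rw [← hj] at this
  simp [Fin.le_def] at this
  omega

end Helpers

/-- Constraint reduction for functions piecewise constant in the lifted direction. -/
theorem constraint_reduction_pw_constant
    (M : ℝ) (p : ℕ) (hp : 0 < p) (t : Fin (p + 1) → ℝ)
    (ht : StrictMono t) (ht0 : t 0 = 0) (htp : t (Fin.last p) = M)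
    (ψ : ℝ → EuclideanSpace ℝ (Fin 2)) (C : Fin p → EuclideanSpace ℝ (Fin 2))
    (hψ : ∀ i : Fin p, ∀ s ∈ Set.Ico (t i.castSucc) (t i.succ), ψ s = C i)
    (τ : ℝ → ℝ) (hmono : MonotoneOn τ (Set.Ici 0))
    (hconc : ConcaveOn ℝ (Set.Ici 0) τ)
    (hlsc : LowerSemicontinuousOn τ (Set.Ici 0))
    (hτ0 : τ 0 = 0) (hτnn : ∀ m, 0 ≤ m → 0 ≤ τ m) :
    (∀ s₁ s₂ : ℝ, s₁ ∈ Set.Icc 0 M → s₂ ∈ Set.Icc 0 M →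
        ‖∫ s in s₁..s₂, ψ s‖ ≤ τ |s₂ - s₁|) ↔
    (∀ i j : Fin (p + 1), ‖∫ s in t i..t j, ψ s‖ ≤ τ |t j - t i|) := by
  constructor
  · intro h i j
    have hmem : ∀ k : Fin (p+1), t k ∈ Set.Icc (0:ℝ) M := fun k =>
      ⟨ht0 ▸ ht.monotone (Fin.zero_le k), htp ▸ ht.monotone (Fin.le_last k)⟩
    exact h _ _ (hmem i) (hmem j)
  · intro hgrid
    -- a.e. equality on pieces
    have hAE : ∀ (i : Fin p) (u v : ℝ), t i.castSucc ≤ u → u ≤ v → v ≤ t i.succ →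
        ψ =ᵐ[volume.restrict (Set.uIoc u v)] fun _ => C i := by
      intro i u v h1 huv h2
      rw [Set.uIoc_of_le huv]
      refine (ae_restrict_iff' measurableSet_Ioc).mpr ?_
      have hsing : (volume : Measure ℝ) {t i.succ} = 0 := measure_singleton _
      filter_upwards [measure_eq_zero_iff_ae_notMem.mp hsing] with x hx hmem
      refine hψ i x ⟨h1.trans hmem.1.le, lt_of_le_of_ne (hmem.2.trans h2) ?_⟩
      simpa [Set.mem_singleton_iff] using hx
    have hPI : ∀ (i : Fin p) (u v : ℝ), t i.castSucc ≤ u → u ≤ v → v ≤ t i.succ →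
        IntervalIntegrable ψ volume u v := fun i u v h1 huv h2 =>
      (intervalIntegrable_const (c := C i)).congr_ae (hAE i u v h1 huv h2).symm
    have hPV : ∀ (i : Fin p) (u v : ℝ), t i.castSucc ≤ u → u ≤ v → v ≤ t i.succ →
        ∫ s in u..v, ψ s = (v - u) • C i := by
      intro i u v h1 huv h2
      rw [integral_congr_ae ((ae_restrict_iff' measurableSet_uIoc).mp (hAE i u v h1 huv h2)),
        intervalIntegral.integral_const]
    have hstep : ∀ i : Fin p, t i.castSucc ≤ t i.succ := fun i => (ht (show i.castSucc < i.succ from Fin.castSucc_lt_succ)).le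
    have hA : ∀ k : Fin (p+1), IntervalIntegrable ψ volume (t 0) (t k) := by
      intro k
      induction k using Fin.induction with
      | zero => exact IntervalIntegrable.refl
      | succ k ih => exact ih.trans (hPI k _ _ le_rfl (hstep k) le_rfl)
    have hGI : ∀ i j : Fin (p+1), IntervalIntegrable ψ volume (t i) (t j) := fun i j =>
      (hA i).symm.trans (hA j)
    -- main one-sided statement
    have main : ∀ s₁ s₂ : ℝ, s₁ ∈ Set.Icc 0 M → s₂ ∈ Set.Icc 0 M → s₁ ≤ s₂ →
        ‖∫ s in s₁..s₂, ψ s‖ ≤ τ (s₂ - s₁) := by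
      intro s₁ s₂ hs₁ hs₂ hle
      rcases eq_or_lt_of_le hle with rfl | hlt
      · simp [hτ0]
      obtain ⟨i, hi⟩ := exists_pc_Ico hp t (ht0 ▸ hs₁.1) (htp ▸ lt_of_lt_of_le hlt hs₂.2)
      by_cases hcase : s₂ ≤ t i.succ
      · -- both in piece i
        rw [hPV i s₁ s₂ hi.1 hle hcase]
        have hΔ : ‖(0:EuclideanSpace ℝ (Fin 2)) + (t i.succ - t i.castSucc) • C i‖
            ≤ τ (0 + (t i.succ - t i.castSucc)) := by
          have h := hgrid i.castSucc i.succ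
          rw [hPV i _ _ le_rfl (hstep i) le_rfl,
            abs_of_nonneg (sub_nonneg.mpr (hstep i))] at h
          simpa using h
        have := concave_bridge τ hconc le_rfl (0:EuclideanSpace ℝ (Fin 2)) (C i)
          (by simp [hτ0]) hΔ (u := s₂ - s₁)
          ⟨sub_nonneg.mpr hle, by have := hi.1; linarith⟩
        simpa using this
      · push_neg at hcase
        obtain ⟨j, hj⟩ := exists_pc_Ioc hp t (ht0 ▸ lt_of_le_of_lt hs₁.1 hlt) (htp ▸ hs₂.2)
        have hij : t i.succ ≤ t j.castSucc := by
          by_contra h; push_neg at h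
          have h1 : j.castSucc < i.succ := ht.lt_iff_lt.mp h
          have h2 : j.succ ≤ i.succ := by
            rw [Fin.lt_def] at h1; rw [Fin.le_def]
            simp only [Fin.coe_castSucc, Fin.val_succ] at h1 ⊢
            omega
          have := ht.monotone h2
          have := hj.2
          linarith
        set a := t i.succ with ha
        set b := t j.castSucc with hb
        set Δi := t i.succ - t i.castSucc with hΔi
        set Δj := t j.succ - t j.castSucc with hΔj
        set I : EuclideanSpace ℝ (Fin 2) := ∫ s in a..b, ψ s with hI
        have hIi₁ : IntervalIntegrable ψ volume s₁ a :=
          hPI i s₁ a hi.1 hi.2.le le_rfl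
        have hIm : IntervalIntegrable ψ volume a b := hGI i.succ j.castSucc
        have hIj : IntervalIntegrable ψ volume b s₂ :=
          hPI j b s₂ le_rfl hj.1.le hj.2
        have hsplit : ∫ s in s₁..s₂, ψ s = (a - s₁) • C i + I + (s₂ - b) • C j := by
          rw [← integral_add_adjacent_intervals (hIi₁.trans hIm) hIj,
            ← integral_add_adjacent_intervals hIi₁ hIm,
            hPV i s₁ a hi.1 hi.2.le le_rfl, hPV j b s₂ le_rfl hj.1.le hj.2]
        rw [hsplit]
        -- corner constraints
        have hba : (0:ℝ) ≤ b - a := sub_nonneg.mpr hij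
        have hΔi0 : (0:ℝ) ≤ Δi := sub_nonneg.mpr (hstep i)
        have hΔj0 : (0:ℝ) ≤ Δj := sub_nonneg.mpr (hstep j)
        have c00 : ‖I‖ ≤ τ (b - a) := by
          have h := hgrid i.succ j.castSucc
          rwa [abs_of_nonneg (by linarith)] at h
        have c01 : ‖I + Δj • C j‖ ≤ τ ((b - a) + Δj) := by
          have h := hgrid i.succ j.succ
          rw [← integral_add_adjacent_intervals hIm (hPI j _ _ le_rfl (hstep j) le_rfl),
            hPV j _ _ le_rfl (hstep j) le_rfl] at h
          rw [show |t j.succ - t i.succ| = (b - a) + Δj by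
            rw [abs_of_nonneg (by simp only [hb, hΔj] at *; linarith)]
            simp only [hb, hΔj]; ring] at h
          exact h
        have c10 : ‖Δi • C i + I‖ ≤ τ ((b - a) + Δi) := by
          have h := hgrid i.castSucc j.castSucc
          rw [← integral_add_adjacent_intervals (hPI i _ _ le_rfl (hstep i) le_rfl) hIm,
            hPV i _ _ le_rfl (hstep i) le_rfl] at h
          rw [show |t j.castSucc - t i.castSucc| = (b - a) + Δi by
            rw [abs_of_nonneg (by simp only [hb, ha, hΔi] at *; linarith)]
            simp only [hb, ha, hΔi]; ring] at h
          exact h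
        have c11 : ‖(Δi • C i + I) + Δj • C j‖ ≤ τ (((b - a) + Δi) + Δj) := by
          have h := hgrid i.castSucc j.succ
          rw [← integral_add_adjacent_intervals
              ((hPI i _ _ le_rfl (hstep i) le_rfl).trans hIm)
              (hPI j _ _ le_rfl (hstep j) le_rfl),
            ← integral_add_adjacent_intervals (hPI i _ _ le_rfl (hstep i) le_rfl) hIm,
            hPV i _ _ le_rfl (hstep i) le_rfl, hPV j _ _ le_rfl (hstep j) le_rfl] at h
          rw [show |t j.succ - t i.castSucc| = ((b - a) + Δi) + Δj by
            rw [abs_of_nonneg (by simp only [hb, ha, hΔi, hΔj] at *; linarith)]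
            simp only [hb, ha, hΔi, hΔj]; ring] at h
          exact h
        have hv : s₂ - b ∈ Set.Icc (0:ℝ) Δj := ⟨by linarith [hj.1], by linarith [hj.2]⟩
        have e0 : ‖I + (s₂ - b) • C j‖ ≤ τ ((b - a) + (s₂ - b)) :=
          concave_bridge τ hconc hba I (C j) c00 c01 hv
        have eΔ : ‖(Δi • C i + I) + (s₂ - b) • C j‖ ≤ τ (((b - a) + Δi) + (s₂ - b)) :=
          concave_bridge τ hconc (by linarith) (Δi • C i + I) (C j) c10 c11 hv
        have hu : a - s₁ ∈ Set.Icc (0:ℝ) Δi := ⟨by linarith [hi.2], by linarith [hi.1]⟩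
        have e0' : ‖(I + (s₂ - b) • C j) + (0:ℝ) • C i‖ ≤ τ (((b - a) + (s₂ - b))) := by
          simpa using e0
        have eΔ' : ‖(I + (s₂ - b) • C j) + Δi • C i‖ ≤ τ (((b - a) + (s₂ - b)) + Δi) := by
          have hvec : (Δi • C i + I) + (s₂ - b) • C j = (I + (s₂ - b) • C j) + Δi • C i := by
            abel
          have harg : ((b - a) + Δi) + (s₂ - b) = ((b - a) + (s₂ - b)) + Δi := by ring
          rw [hvec, harg] at eΔ
          exact eΔ
        have final := concave_bridge τ hconc (by linarith [hv.1])
          (I + (s₂ - b) • C j) (C i) e0 eΔ' hu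
        have hvec2 : (a - s₁) • C i + I + (s₂ - b) • C j
            = (I + (s₂ - b) • C j) + (a - s₁) • C i := by abel
        have harg2 : ((b - a) + (s₂ - b)) + (a - s₁) = s₂ - s₁ := by ring
        rw [hvec2, ← harg2]
        exact final
    intro s₁ s₂ h₁ h₂
    rcases le_total s₁ s₂ with h | h
    · rw [abs_of_nonneg (sub_nonneg.mpr h)]
      exact main s₁ s₂ h₁ h₂ h
    · rw [abs_sub_comm, abs_of_nonneg (sub_nonneg.mpr h), integral_symm s₂ s₁, norm_neg]
      exact main s₂ s₁ h₂ h₁ h
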